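/- arXiv:1909.02768 — 2 statements merged into one kernel-verified Lean document; each statement's English description precedes it below -/
import Mathlib

section
/- Let F ⊆ ℝⁿ be uniformly discrete, i.e., there exists δ > 0 such that for every x ∈ F, the ball B_δ(x) intersects F only in {x}. Let ⪰ be a reflexive, total, and transitive relation on F. Then there exists a continuous function g : ℝⁿ → ℝ such that for all x, y ∈ F, x ⪰ y if and only if g(x) ≥ g(y). -/
theorem stmt_5 {n : ℕ} (F : Set (EuclideanSpace ℝ (Fin n)))
    (δ : ℝ) (hδ : 0 < δ)
    (hdisc : ∀ x ∈ F, Metric.ball x δ ∩ F = {x})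
    (succeq : EuclideanSpace ℝ (Fin n) → EuclideanSpace ℝ (Fin n) → Prop)
    (hrefl : ∀ x ∈ F, succeq x x)
    (htotal : ∀ x ∈ F, ∀ y ∈ F, succeq x y ∨ succeq y x)
    (htrans : ∀ x ∈ F, ∀ y ∈ F, ∀ z ∈ F, succeq x y → succeq y z → succeq x z) :
    ∃ g : EuclideanSpace ℝ (Fin n) → ℝ, Continuous g ∧
      ∀ x ∈ F, ∀ y ∈ F, (succeq x y ↔ g y ≤ g x) := by
  classical
  have hsep : ∀ x ∈ F, ∀ y ∈ F, x ≠ y → δ ≤ dist x y := by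
    intro x hx y hy hne
    by_contra h
    push_neg at h
    have hmem : y ∈ Metric.ball x δ ∩ F :=
      ⟨Metric.mem_ball.2 (by rw [dist_comm]; exact h), hy⟩
    rw [hdisc x hx] at hmem
    exact hne hmem.symm
  have hcnt : F.Countable := by
    have hpd : F.PairwiseDisjoint (fun x => Metric.ball x (δ/2)) := by
      intro x hx y hy hne
      exact Metric.ball_disjoint_ball (by linarith [hsep x hx y hy hne])
    exact hpd.countable_of_isOpen (fun x _ => Metric.isOpen_ball)
      (fun x _ => Metric.nonempty_ball.2 (by linarith))
  have hclosed : IsClosed F := by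
    apply isClosed_of_closure_subset
    intro z hz
    rw [Metric.mem_closure_iff] at hz
    obtain ⟨x, hxF, hxz⟩ := hz (δ/2) (by linarith)
    rcases eq_or_ne z x with rfl | hne
    · exact hxF
    · exfalso
      have hr : 0 < min (dist z x) (δ/2) := lt_min (dist_pos.2 hne) (by linarith)
      obtain ⟨y, hyF, hyz⟩ := hz _ hr
      have hyx : y ≠ x := by
        rintro rfl
        exact absurd (lt_of_lt_of_le hyz (min_le_left _ _)) (lt_irrefl _)
      have h1 : dist z y < δ/2 := lt_of_lt_of_le hyz (min_le_right _ _)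
      have : dist y x < δ := by
        calc dist y x ≤ dist y z + dist z x := dist_triangle _ _ _
        _ < δ/2 + δ/2 := by rw [dist_comm y z]; exact add_lt_add h1 hxz
        _ = δ := by ring
      exact absurd this (not_lt.2 (hsep y hyF x hxF hyx))
  have hdiscrete : DiscreteTopology F := by
    apply discreteTopology_iff_isOpen_singleton.mpr
    rintro ⟨x, hx⟩
    have hset : ({⟨x, hx⟩} : Set F) = Subtype.val ⁻¹' Metric.ball x δ := by
      ext ⟨y, hy⟩
      simp only [Set.mem_singleton_iff, Set.mem_preimage, Subtype.mk.injEq]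
      constructor
      · rintro rfl; exact Metric.mem_ball_self hδ
      · intro h
        have hmem : y ∈ Metric.ball x δ ∩ F := ⟨h, hy⟩
        rw [hdisc x hx] at hmem
        exact hmem
    rw [hset]
    exact Metric.isOpen_ball.preimage continuous_subtype_val
  rcases F.eq_empty_or_nonempty with rfl | hne
  · exact ⟨0, continuous_const, by simp⟩
  obtain ⟨e, he⟩ := hcnt.exists_eq_range hne
  have heF : ∀ k, e k ∈ F := fun k => he ▸ Set.mem_range_self k
  set f : EuclideanSpace ℝ (Fin n) → ℝ :=
    fun x => ∑' k, if succeq x (e k) then (1/2 : ℝ)^k else 0 with hf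
  have hsm : ∀ x, Summable (fun k => if succeq x (e k) then (1/2 : ℝ)^k else 0) := by
    intro x
    refine Summable.of_nonneg_of_le (fun k => ?_) (fun k => ?_)
      (summable_geometric_of_lt_one (r := (1/2 : ℝ)) (by norm_num) (by norm_num))
    · split_ifs <;> positivity
    · split_ifs
      · exact le_refl _
      · positivity
  have hmono : ∀ x ∈ F, ∀ y ∈ F, succeq x y → f y ≤ f x := by
    intro x hx y hy hxy
    apply Summable.tsum_le_tsum _ (hsm y) (hsm x)
    intro k
    by_cases h : succeq y (e k)
    · have h2 : succeq x (e k) := htrans x hx y hy (e k) (heF k) hxy h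
      simp [h, h2]
    · simp only [h, if_false]
      split_ifs <;> positivity
  have hstrict : ∀ x ∈ F, ∀ y ∈ F, ¬ succeq x y → f x < f y := by
    intro x hx y hy hnxy
    have hyx : succeq y x := (htotal x hx y hy).resolve_left hnxy
    obtain ⟨k0, hk0⟩ : ∃ k, e k = y := by
      have := hy; rw [he] at this; exact this
    apply Summable.tsum_lt_tsum (i := k0) _ _ (hsm x) (hsm y)
    · intro k
      by_cases h : succeq x (e k)
      · have h2 : succeq y (e k) := htrans y hy x hx (e k) (heF k) hyx h
        simp [h, h2]
      · simp only [h, if_false]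
        split_ifs <;> positivity
    · have h1 : ¬ succeq x (e k0) := by rw [hk0]; exact hnxy
      have h2 : succeq y (e k0) := by rw [hk0]; exact hrefl y hy
      simp only [h1, h2, if_false, if_true]
      positivity
  have hfc : Continuous (fun p : F => f p) := continuous_of_discreteTopology
  obtain ⟨g, hg⟩ := ContinuousMap.exists_restrict_eq hclosed ⟨fun p : F => f p, hfc⟩
  refine ⟨g, g.continuous, ?_⟩
  have hgf : ∀ x ∈ F, g x = f x := by
    intro x hx
    have := congrFun (congrArg ContinuousMap.toFun hg) ⟨x, hx⟩
    simpa using this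
  intro x hx y hy
  rw [hgf x hx, hgf y hy]
  constructor
  · exact hmono x hx y hy
  · intro h
    by_contra hn
    exact absurd h (not_le.2 (hstrict x hx y hy hn))
end

section
/- Let ⪰ be a reflexive, total, transitive relation on F ⊆ ℝⁿ with F convex and open, such that P_x = {y : ¬(x ⪰ y)} and N_x = {y : ¬(y ⪰ x)} are open for every x ∈ F, and suppose the quotient F/∼ (where x ∼ y ↔ x ⪰ y ∧ y ⪰ x) carries a metric d with d(∂_x, ∂_y) = inf{‖x' - y'‖ : x' ∈ ∂_x, y' ∈ ∂_y}. Then there exists a continuous function g : F → ℝ such that for all x, y ∈ F: x ⪰ y if and only if g(x) ≥ g(y). -/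
lemma seg_norm_add {E : Type*} [NormedAddCommGroup E] [NormedSpace ℝ E]
    {a c b : E} (hb : b ∈ segment ℝ a c) : ‖a - b‖ + ‖b - c‖ = ‖a - c‖ := by
  obtain ⟨s, t, hs, ht, hst, rfl⟩ := hb
  have h1 : a - (s • a + t • c) = t • (a - c) := by
    rw [smul_sub]
    have : (1 : ℝ) • a = a := one_smul ℝ a
    calc a - (s • a + t • c) = (1 - s) • a - t • c := by
          rw [sub_smul, one_smul]; abel
      _ = t • a - t • c := by rw [show (1 : ℝ) - s = t by linarith]
  have h2 : (s • a + t • c) - c = s • (a - c) := by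
    rw [smul_sub]
    calc (s • a + t • c) - c = s • a - (1 - t) • c := by
          rw [sub_smul, one_smul]; abel
      _ = s • a - s • c := by rw [show (1 : ℝ) - t = s by linarith]
  rw [h1, h2, norm_smul, norm_smul, Real.norm_eq_abs, Real.norm_eq_abs,
    abs_of_nonneg ht, abs_of_nonneg hs, ← add_mul]
  rw [show t + s = 1 by linarith, one_mul]

theorem stmt_15 {n : ℕ} (F : Set (EuclideanSpace ℝ (Fin n)))
    (hFconv : Convex ℝ F) (hFopen : IsOpen F)
    (succeq : EuclideanSpace ℝ (Fin n) → EuclideanSpace ℝ (Fin n) → Prop)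
    (hrefl : ∀ x ∈ F, succeq x x)
    (htotal : ∀ x ∈ F, ∀ y ∈ F, succeq x y ∨ succeq y x)
    (htrans : ∀ x ∈ F, ∀ y ∈ F, ∀ z ∈ F, succeq x y → succeq y z → succeq x z)
    (hPopen : ∀ x ∈ F, IsOpen {y | y ∈ F ∧ ¬ succeq x y})
    (hNopen : ∀ x ∈ F, IsOpen {y | y ∈ F ∧ ¬ succeq y x})
    (cls : EuclideanSpace ℝ (Fin n) → Set (EuclideanSpace ℝ (Fin n)))
    (hcls : ∀ x, cls x = {y | y ∈ F ∧ succeq x y ∧ succeq y x})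
    (d : EuclideanSpace ℝ (Fin n) → EuclideanSpace ℝ (Fin n) → ℝ)
    (hd_def : ∀ x ∈ F, ∀ y ∈ F,
      d x y = sInf (Set.image2 (fun a b => ‖a - b‖) (cls x) (cls y)))
    (hd_symm : ∀ x ∈ F, ∀ y ∈ F, d x y = d y x)
    (hd_eq_zero : ∀ x ∈ F, ∀ y ∈ F, (d x y = 0 ↔ (succeq x y ∧ succeq y x)))
    (hd_triangle : ∀ x ∈ F, ∀ y ∈ F, ∀ z ∈ F, d x z ≤ d x y + d y z)
    (hd_nonneg : ∀ x ∈ F, ∀ y ∈ F, 0 ≤ d x y) :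
    ∃ g : EuclideanSpace ℝ (Fin n) → ℝ, ContinuousOn g F ∧
      ∀ x ∈ F, ∀ y ∈ F, (succeq x y ↔ g y ≤ g x) := by
  classical
  rcases F.eq_empty_or_nonempty with hFe | ⟨x₀, hx₀⟩
  · exact ⟨0, continuousOn_const, fun x hx => by simp [hFe] at hx⟩
  set g : EuclideanSpace ℝ (Fin n) → ℝ :=
    fun x => if succeq x x₀ then d x₀ x else -(d x₀ x) with hg
  -- boundedness of the distance sets
  have hbdd : ∀ (p q : Set (EuclideanSpace ℝ (Fin n))),
      BddBelow (Set.image2 (fun a b => ‖a - b‖) p q) := by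
    intro p q
    refine ⟨0, ?_⟩
    rintro r ⟨a, ha, b, hb, rfl⟩
    positivity
  -- betweenness lemma
  have hB : ∀ a ∈ F, ∀ c ∈ F, ∀ y ∈ F, succeq a y → succeq y c →
      ∃ b ∈ segment ℝ a c, b ∈ F ∧ succeq y b ∧ succeq b y := by
    intro a ha c hc y hy hay hyc
    by_contra hno
    push_neg at hno
    have hseg : segment ℝ a c ⊆ F := hFconv.segment_subset ha hc
    have hconn : IsPreconnected (segment ℝ a c) := (convex_segment a c).isPreconnected
    have hcover : segment ℝ a c ⊆
        {v | v ∈ F ∧ ¬ succeq y v} ∪ {v | v ∈ F ∧ ¬ succeq v y} := by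
      intro w hw
      have hwF : w ∈ F := hseg hw
      by_cases h1 : succeq y w
      · by_cases h2 : succeq w y
        · exact absurd h2 (hno w hw hwF h1)
        · exact Or.inr ⟨hwF, h2⟩
      · exact Or.inl ⟨hwF, h1⟩
    have haU : a ∈ segment ℝ a c ∩ {v | v ∈ F ∧ ¬ succeq y v} := by
      refine ⟨left_mem_segment ℝ a c, ha, ?_⟩
      intro hya
      exact hno a (left_mem_segment ℝ a c) ha hya hay
    have hcV : c ∈ segment ℝ a c ∩ {v | v ∈ F ∧ ¬ succeq v y} := by
      refine ⟨right_mem_segment ℝ a c, hc, ?_⟩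
      intro hcy
      exact hno c (right_mem_segment ℝ a c) hc hyc hcy
    obtain ⟨w, hwseg, ⟨_, hw1⟩, ⟨hwF, hw2⟩⟩ :=
      hconn _ _ (hPopen y hy) (hNopen y hy) hcover ⟨a, haU⟩ ⟨c, hcV⟩
    rcases htotal y hy w hwF with h | h
    · exact hw1 h
    · exact hw2 h
  -- additivity of d along the order
  have hM : ∀ x ∈ F, ∀ y ∈ F, ∀ z ∈ F, succeq x y → succeq y z →
      d x z = d x y + d y z := by
    intro x hx y hy z hz hxy hyz
    refine le_antisymm (hd_triangle x hx y hy z hz) ?_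
    rw [hd_def x hx z hz]
    refine le_csInf ?_ ?_
    · exact ⟨‖x - z‖, x, by rw [hcls]; exact ⟨hx, hrefl x hx, hrefl x hx⟩,
        z, by rw [hcls]; exact ⟨hz, hrefl z hz, hrefl z hz⟩, rfl⟩
    · rintro r ⟨a, haxm, c, hczm, rfl⟩
      rw [hcls] at haxm hczm
      obtain ⟨haF, hxa, hax⟩ := haxm
      obtain ⟨hcF, hzc, hcz⟩ := hczm
      have hay : succeq a y := htrans a haF x hx y hy hax hxy
      have hyc : succeq y c := htrans y hy z hz c hcF hyz hzc
      obtain ⟨b, hbseg, hbF, hyb, hby⟩ := hB a haF c hcF y hy hay hyc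
      have h1 : d x y ≤ ‖a - b‖ := by
        rw [hd_def x hx y hy]
        exact csInf_le (hbdd _ _) ⟨a, by rw [hcls]; exact ⟨haF, hxa, hax⟩,
          b, by rw [hcls]; exact ⟨hbF, hyb, hby⟩, rfl⟩
      have h2 : d y z ≤ ‖b - c‖ := by
        rw [hd_def y hy z hz]
        exact csInf_le (hbdd _ _) ⟨b, by rw [hcls]; exact ⟨hbF, hyb, hby⟩,
          c, by rw [hcls]; exact ⟨hcF, hzc, hcz⟩, rfl⟩
      have := seg_norm_add hbseg
      linarith
  -- g x - g y = d x y whenever x ⪰ y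
  have hGdiff : ∀ x ∈ F, ∀ y ∈ F, succeq x y → g x - g y = d x y := by
    intro x hx y hy hxy
    by_cases hyx₀ : succeq y x₀
    · have hxx₀ : succeq x x₀ := htrans x hx y hy x₀ hx₀ hxy hyx₀
      simp only [hg, if_pos hxx₀, if_pos hyx₀]
      have hm := hM x hx y hy x₀ hx₀ hxy hyx₀
      have hs1 := hd_symm x hx x₀ hx₀
      have hs2 := hd_symm y hy x₀ hx₀
      linarith
    · have hx₀y : succeq x₀ y := (htotal y hy x₀ hx₀).resolve_left hyx₀
      by_cases hxx₀ : succeq x x₀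
      · simp only [hg, if_pos hxx₀, if_neg hyx₀]
        have hm := hM x hx x₀ hx₀ y hy hxx₀ hx₀y
        have hs1 := hd_symm x hx x₀ hx₀
        linarith
      · have hx₀x : succeq x₀ x := (htotal x hx x₀ hx₀).resolve_left hxx₀
        simp only [hg, if_neg hxx₀, if_neg hyx₀]
        have hm := hM x₀ hx₀ x hx y hy hx₀x hxy
        linarith
  refine ⟨g, ?_, ?_⟩
  · -- continuity via Lipschitz
    have hLip : LipschitzOnWith 1 g F := by
      apply LipschitzOnWith.of_dist_le_mul
      intro x hx y hy
      rw [Real.dist_eq, NNReal.coe_one, one_mul]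
      have hdn : d x y ≤ dist x y := by
        rw [hd_def x hx y hy, dist_eq_norm]
        exact csInf_le (hbdd _ _) ⟨x, by rw [hcls]; exact ⟨hx, hrefl x hx, hrefl x hx⟩,
          y, by rw [hcls]; exact ⟨hy, hrefl y hy, hrefl y hy⟩, rfl⟩
      have hsym := hd_symm x hx y hy
      rcases htotal x hx y hy with h | h
      · have h1 := hGdiff x hx y hy h
        have h2 := hd_nonneg x hx y hy
        rw [abs_of_nonneg (by linarith)]
        linarith
      · have h1 := hGdiff y hy x hx h
        have h2 := hd_nonneg y hy x hx
        rw [abs_of_nonpos (by linarith)]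
        linarith
    exact hLip.continuousOn
  · intro x hx y hy
    constructor
    · intro h
      have h1 := hGdiff x hx y hy h
      have h2 := hd_nonneg x hx y hy
      linarith
    · intro h
      rcases htotal x hx y hy with h1 | h1
      · exact h1
      · have hdgy := hGdiff y hy x hx h1
        have h0 : d y x = 0 :=
          le_antisymm (by linarith) (hd_nonneg y hy x hx)
        exact ((hd_eq_zero y hy x hx).mp h0).2
end
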